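/- Let n ≥ 3, 2 ≤ i_1 ≤ n−2, i_1+1 ≤ t_2 ≤ n−1, and i_2 with i_2 + t_2 > n, n−t_2+1 ≤ i_2 ≤ n−t_2+i_1−1 and i_1 < i_2. Then the vector (i_1+1)·e_1 + (n−i_1−1)·e_{i_1+1} belongs to {α ∈ ℕ^n : |α| = n, α_1+...+α_{i_1} ≤ i_1+1, Σ_{k=1}^{i_2+t_2−n} α_k + Σ_{k=t_2+1}^n α_k ≤ i_2+1}, but does not belong to the base set of any transversal polymatroid presented by sets C_1,...,C_n ⊆ [n] in which at most i_2+t_2−n+1 of the C_k contain the element 1. -/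

import Mathlib

theorem stmt19 (n i1 i2 t2 : ℕ) (hn : 3 ≤ n) (hi1a : 2 ≤ i1) (hi1b : i1 ≤ n - 2)
    (ht2a : i1 + 1 ≤ t2) (ht2b : t2 ≤ n - 1)
    (hcyc : n < i2 + t2) (hi2a : n - t2 + 1 ≤ i2) (hi2b : i2 ≤ n - t2 + i1 - 1)
    (hi12 : i1 < i2)
    (v : Fin n → ℕ)
    (hv : v = fun m : Fin n => if m.val = 0 then i1 + 1 else if m.val = i1 then n - i1 - 1 else 0) :
    (∑ k, v k = n ∧
      ∑ k ∈ Finset.univ.filter (fun m : Fin n => m.val < i1), v k ≤ i1 + 1 ∧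
      ∑ k ∈ Finset.univ.filter (fun m : Fin n => m.val < i2 + t2 - n ∨ t2 ≤ m.val), v k
        ≤ i2 + 1) ∧
    ∀ C : Fin n → Set (Fin n),
      Set.ncard {k : Fin n | (⟨0, by omega⟩ : Fin n) ∈ C k} ≤ i2 + t2 - n + 1 →
      v ∉ {α : Fin n → ℕ | ∃ j : Fin n → Fin n, (∀ k, j k ∈ C k) ∧
        α = ∑ k, Pi.single (j k) 1} := by
  set z : Fin n := ⟨0, by omega⟩ with hz
  set w : Fin n := ⟨i1, by omega⟩ with hw
  have hzw : z ≠ w := by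
    simp only [hz, hw, ne_eq, Fin.mk.injEq]; omega
  have hvdecomp : ∀ k : Fin n, v k =
      (if k = z then i1 + 1 else 0) + (if k = w then n - i1 - 1 else 0) := by
    intro k
    rcases k with ⟨kv, hk⟩
    simp only [hv, hz, hw, Fin.mk.injEq]
    by_cases h0 : kv = 0
    · subst h0; simp; omega
    · by_cases h1 : kv = i1
      · subst h1; simp [h0]
      · simp [h0, h1]
  constructor
  · refine ⟨?_, ?_, ?_⟩
    · rw [Finset.sum_congr rfl (fun k _ => hvdecomp k), Finset.sum_add_distrib]
      rw [Finset.sum_ite_eq' Finset.univ z (fun _ => i1 + 1),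
        Finset.sum_ite_eq' Finset.univ w (fun _ => n - i1 - 1)]
      simp; omega
    · rw [Finset.sum_congr rfl (fun k _ => hvdecomp k), Finset.sum_add_distrib]
      rw [Finset.sum_ite_eq' _ z (fun _ => i1 + 1),
        Finset.sum_ite_eq' _ w (fun _ => n - i1 - 1)]
      have hzmem : z ∈ Finset.univ.filter (fun m : Fin n => m.val < i1) := by
        simp [hz]; omega
      have hwmem : w ∉ Finset.univ.filter (fun m : Fin n => m.val < i1) := by
        simp [hw]
      simp [hzmem, hwmem]
    · rw [Finset.sum_congr rfl (fun k _ => hvdecomp k), Finset.sum_add_distrib]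
      rw [Finset.sum_ite_eq' _ z (fun _ => i1 + 1),
        Finset.sum_ite_eq' _ w (fun _ => n - i1 - 1)]
      have hzmem : z ∈ Finset.univ.filter
          (fun m : Fin n => m.val < i2 + t2 - n ∨ t2 ≤ m.val) := by
        simp [hz]; omega
      have hwmem : w ∉ Finset.univ.filter
          (fun m : Fin n => m.val < i2 + t2 - n ∨ t2 ≤ m.val) := by
        simp [hw]; omega
      simp [hzmem, hwmem]; omega
  · intro C hC hmem
    obtain ⟨j, hjC, hvj⟩ := hmem
    have hv0 : v z = i1 + 1 := by simp [hv, hz]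
    have hv0' : v z = (Finset.univ.filter (fun k => z = j k)).card := by
      rw [hvj]
      rw [Finset.card_filter]
      simp only [Finset.sum_apply, Pi.single_apply]
    have hsub : ↑(Finset.univ.filter (fun k => z = j k)) ⊆
        {k : Fin n | z ∈ C k} := by
      intro k hk
      simp only [Finset.coe_filter, Set.mem_setOf_eq, Finset.mem_univ, true_and] at hk
      simpa [← hk] using hjC k
    have hcard : (Finset.univ.filter (fun k => z = j k)).card ≤
        Set.ncard {k : Fin n | z ∈ C k} := by
      rw [← Set.ncard_coe_finset]
      exact Set.ncard_le_ncard hsub (Set.toFinite _)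
    omega
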